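/- In the plane, the vertices of the (rational) dual of a lattice polygon P with 0 in its interior determine all nontrivial mutation directions: if mut_w(P,F) is a combinatorial mutation of P that is not equal to P, then w is the primitive generator of the ray through some vertex of the dual polygon P*. -/

import Mathlib

open Set Pointwise

noncomputable section

def pairing {n : ℕ} (w : Fin n → ℤ) (x : Fin n → ℚ) : ℚ :=
  ∑ i, (w i : ℚ) * x i

def IsLatticePt {n : ℕ} (x : Fin n → ℚ) : Prop := ∀ i, ∃ z : ℤ, x i = (z : ℚ)

def IsLatticePolytope {n : ℕ} (P : Set (Fin n → ℚ)) : Prop :=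
  ∃ S : Finset (Fin n → ℚ), (∀ x ∈ S, IsLatticePt x) ∧ P = convexHull ℚ (S : Set (Fin n → ℚ))

def IsPrimitive {n : ℕ} (w : Fin n → ℤ) : Prop := Finset.univ.gcd w = 1

def wSlice {n : ℕ} (w : Fin n → ℤ) (h : ℤ) (P : Set (Fin n → ℚ)) : Set (Fin n → ℚ) :=
  convexHull ℚ {x | x ∈ P ∧ IsLatticePt x ∧ pairing w x = (h : ℚ)}

def mutation {n : ℕ} (w : Fin n → ℤ) (P F : Set (Fin n → ℚ)) (G : ℤ → Set (Fin n → ℚ)) :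
    Set (Fin n → ℚ) :=
  convexHull ℚ ((⋃ h : ℤ, ⋃ _ : h < 0, G h) ∪
    ⋃ h : ℤ, ⋃ _ : 0 ≤ h, (wSlice w h P + (h : ℚ) • F))

def IsMutData {n : ℕ} (w : Fin n → ℤ) (P F : Set (Fin n → ℚ))
    (G : ℤ → Set (Fin n → ℚ)) : Prop :=
  IsLatticePolytope F ∧ F.Nonempty ∧ (∀ x ∈ F, pairing w x = 0) ∧
  ∀ h : ℤ, h < 0 →
    (G h = ∅ ∨ IsLatticePolytope (G h)) ∧
    {v | v ∈ P.extremePoints ℚ ∧ pairing w v = (h : ℚ)} ⊆ G h + (-(h : ℚ)) • F ∧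
    G h + (-(h : ℚ)) • F ⊆ wSlice w h P

def dpair {n : ℕ} (u v : Fin n → ℚ) : ℚ := ∑ i, u i * v i

def dualP {n : ℕ} (P : Set (Fin n → ℚ)) : Set (Fin n → ℚ) := {u | ∀ v ∈ P, -1 ≤ dpair u v}

namespace MutAux

lemma pairing_isLinear (w : Fin 2 → ℤ) : IsLinearMap ℚ (pairing w) := by
  constructor
  · intro x y; simp only [pairing, Fin.sum_univ_two, Pi.add_apply]; ring
  · intro c x; simp only [pairing, Fin.sum_univ_two, Pi.smul_apply, smul_eq_mul]; ring

lemma le_pairing_hull {w : Fin 2 → ℤ} {S : Finset (Fin 2 → ℚ)} {m : ℚ}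
    (h : ∀ s ∈ S, m ≤ pairing w s) :
    ∀ x ∈ convexHull ℚ (S : Set (Fin 2 → ℚ)), m ≤ pairing w x := fun _ hx =>
  convexHull_min h (convex_halfSpace_ge (pairing_isLinear w) m) hx

lemma pairing_combo (w : Fin 2 → ℤ) (s r : ℚ) (a b : Fin 2 → ℚ) :
    pairing w (s • a + r • b) = s * pairing w a + r * pairing w b := by
  simp only [pairing, Fin.sum_univ_two, Pi.add_apply, Pi.smul_apply, smul_eq_mul]; ring

lemma dpair_combo (s r : ℚ) (a b p : Fin 2 → ℚ) :
    dpair (s • a + r • b) p = s * dpair a p + r * dpair b p := by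
  simp only [dpair, Fin.sum_univ_two, Pi.add_apply, Pi.smul_apply, smul_eq_mul]; ring

lemma combo_forces {s r va vb m : ℚ} (hs : 0 < s) (hr : 0 < r) (hsr : s + r = 1)
    (ha : m ≤ va) (hb : m ≤ vb) (h : s * va + r * vb = m) : va = m ∧ vb = m := by
  have t1 : 0 ≤ s * (va - m) := mul_nonneg hs.le (by linarith)
  have t2 : 0 ≤ r * (vb - m) := mul_nonneg hr.le (by linarith)
  have hsum : s * (va - m) + r * (vb - m) = 0 := by linear_combination h - m * hsr
  have e1 : s * (va - m) = 0 := by linarith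
  have e2 : r * (vb - m) = 0 := by linarith
  constructor
  · rcases mul_eq_zero.mp e1 with h' | h'
    · exact absurd h' (ne_of_gt hs)
    · linarith
  · rcases mul_eq_zero.mp e2 with h' | h'
    · exact absurd h' (ne_of_gt hr)
    · linarith

lemma mem_hull_filter {w : Fin 2 → ℤ} {S : Finset (Fin 2 → ℚ)} {m : ℚ}
    (hmin : ∀ s ∈ S, m ≤ pairing w s) {x : Fin 2 → ℚ}
    (hx : x ∈ convexHull ℚ (S : Set (Fin 2 → ℚ))) (hxm : pairing w x = m) :
    x ∈ convexHull ℚ ((S.filter fun s => pairing w s = m) : Set (Fin 2 → ℚ)) := by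
  classical
  rw [Finset.convexHull_eq] at hx
  obtain ⟨f, hf0, hf1, hfx⟩ := hx
  rw [Finset.centerMass_eq_of_sum_1 _ _ hf1] at hfx
  simp only [id] at hfx
  have hL : ∑ y ∈ S, f y * pairing w y = m := by
    have h1 : pairing w (∑ y ∈ S, f y • y) = ∑ y ∈ S, f y * pairing w y := by
      have h2 := map_sum (IsLinearMap.mk' (pairing w) (pairing_isLinear w))
        (fun y => f y • y) S
      simp only [IsLinearMap.mk'_apply] at h2
      rw [h2]
      refine Finset.sum_congr rfl fun y _ => ?_
      rw [(pairing_isLinear w).map_smul, smul_eq_mul]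
    rw [hfx] at h1
    rw [← h1, hxm]
  have hz : ∀ y ∈ S, f y * (pairing w y - m) = 0 := by
    rw [← Finset.sum_eq_zero_iff_of_nonneg
      (fun y hy => mul_nonneg (hf0 y hy) (sub_nonneg.mpr (hmin y hy)))]
    have : ∑ y ∈ S, f y * (pairing w y - m) =
        (∑ y ∈ S, f y * pairing w y) - m * ∑ y ∈ S, f y := by
      rw [Finset.mul_sum, ← Finset.sum_sub_distrib]; exact Finset.sum_congr rfl fun y _ => by ring
    rw [this, hL, hf1, mul_one, sub_self]
  have hfz : ∀ y ∈ S, pairing w y ≠ m → f y = 0 := by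
    intro y hy hne
    rcases mul_eq_zero.mp (hz y hy) with h | h
    · exact h
    · exact absurd (by linarith [sub_eq_zero.mp h]) hne
  rw [Finset.convexHull_eq]
  refine ⟨f, fun y hy => hf0 y (Finset.mem_filter.mp hy).1, ?_, ?_⟩
  · rw [← hf1, Finset.sum_filter_of_ne]
    intro y hy hne
    by_contra hpm
    exact hne (hfz y hy hpm)
  · have hsum1 : ∑ y ∈ S.filter (fun s => pairing w s = m), f y = 1 := by
      rw [← hf1, Finset.sum_filter_of_ne]
      intro y hy hne
      by_contra hpm
      exact hne (hfz y hy hpm)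
    rw [Finset.centerMass_eq_of_sum_1 _ _ hsum1]
    simp only [id]
    rw [← hfx, Finset.sum_filter_of_ne]
    intro y hy hne
    by_contra hpm
    exact hne (by rw [hfz y hy hpm, zero_smul])



lemma eq_of_pairings {w : Fin 2 → ℤ} (hw : ¬ ((w 0 : ℚ) = 0 ∧ (w 1 : ℚ) = 0))
    {a b : Fin 2 → ℚ} (h1 : pairing w a = pairing w b)
    (h2 : pairing ![-w 1, w 0] a = pairing ![-w 1, w 0] b) : a = b := by
  simp only [pairing, Fin.sum_univ_two, Matrix.cons_val_zero, Matrix.cons_val_one,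
    Matrix.head_cons, Int.cast_neg] at h1 h2
  have hW : 0 < (w 0 : ℚ) ^ 2 + (w 1 : ℚ) ^ 2 := by
    rcases not_and_or.mp hw with h | h
    · positivity
    · positivity
  have e0 : ((w 0 : ℚ) ^ 2 + (w 1 : ℚ) ^ 2) * (a 0 - b 0) = 0 := by
    linear_combination (w 0 : ℚ) * h1 - (w 1 : ℚ) * h2
  have e1 : ((w 0 : ℚ) ^ 2 + (w 1 : ℚ) ^ 2) * (a 1 - b 1) = 0 := by
    linear_combination (w 1 : ℚ) * h1 + (w 0 : ℚ) * h2
  have g0 : a 0 = b 0 := by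
    have := (mul_eq_zero.mp e0).resolve_left (ne_of_gt hW); linarith [sub_eq_zero.mp this]
  have g1 : a 1 = b 1 := by
    have := (mul_eq_zero.mp e1).resolve_left (ne_of_gt hW); linarith [sub_eq_zero.mp this]
  funext i; fin_cases i
  · exact g0
  · exact g1

lemma dual_eq {u a p q : Fin 2 → ℚ} (hap : dpair a p = -1) (haq : dpair a q = -1)
    (hup : dpair u p = -1) (huq : dpair u q = -1) (hpq : p ≠ q) : a = u := by
  simp only [dpair, Fin.sum_univ_two] at hap haq hup huq
  have Ep : (a 0 - u 0) * p 0 + (a 1 - u 1) * p 1 = 0 := by linarith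
  have Eq' : (a 0 - u 0) * q 0 + (a 1 - u 1) * q 1 = 0 := by linarith
  by_cases hD : p 0 * q 1 - p 1 * q 0 = 0
  · exfalso
    apply hpq
    have g0 : p 0 = q 0 := by linear_combination (-(q 0)) * hup + p 0 * huq - u 1 * hD
    have g1 : p 1 = q 1 := by linear_combination (-(q 1)) * hup + p 1 * huq + u 0 * hD
    funext i; fin_cases i
    · exact g0
    · exact g1
  · have e0 : (a 0 - u 0) * (p 0 * q 1 - p 1 * q 0) = 0 := by
      linear_combination q 1 * Ep - p 1 * Eq'
    have e1 : (a 1 - u 1) * (p 0 * q 1 - p 1 * q 0) = 0 := by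
      linear_combination (- q 0) * Ep + p 0 * Eq'
    have g0 : a 0 = u 0 := by
      have := (mul_eq_zero.mp e0).resolve_right hD; linarith [sub_eq_zero.mp this]
    have g1 : a 1 = u 1 := by
      have := (mul_eq_zero.mp e1).resolve_right hD; linarith [sub_eq_zero.mp this]
    funext i; fin_cases i
    · exact g0
    · exact g1

end MutAux

open MutAux

/-- In the plane, nontrivial mutation directions are primitive generators of rays through
vertices of the dual polygon: if `mut_w(P,F)` is a combinatorial mutation of a lattice
polygon `P` (with `0` in its interior) with a positive-dimensional factor `F`, and the
mutation is not equal to `P`, then `w` is a positive multiple of a vertex of `P*`. -/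
theorem planar_mutation_directions (w : Fin 2 → ℤ) (P F : Set (Fin 2 → ℚ))
    (G : ℤ → Set (Fin 2 → ℚ)) (hP : IsLatticePolytope P)
    (h0 : (0 : Fin 2 → ℚ) ∈ interior P) (hw : IsPrimitive w)
    (hdata : IsMutData w P F G) (hF : ¬ F.Subsingleton)
    (hnontrivial : mutation w P F G ≠ P) :
    ∃ u ∈ (dualP P).extremePoints ℚ, ∃ c : ℚ, 0 < c ∧
      (fun i => (w i : ℚ)) = c • u := by
  classical
  obtain ⟨S, hSlat, hPS⟩ := hP
  -- w is nonzero
  have hwne : ¬ ((w 0 : ℚ) = 0 ∧ (w 1 : ℚ) = 0) := by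
    rintro ⟨h1, h2⟩
    have hw0 : w 0 = 0 := by exact_mod_cast h1
    have hw1 : w 1 = 0 := by exact_mod_cast h2
    have : Finset.univ.gcd w = 0 := Finset.gcd_eq_zero_iff.mpr (by
      intro i _; fin_cases i <;> assumption)
    rw [hw] at this; norm_num at this
  have h0P : (0 : Fin 2 → ℚ) ∈ P := interior_subset h0
  have hSne : S.Nonempty := by
    rcases S.eq_empty_or_nonempty with rfl | h
    · rw [hPS] at h0P; simp at h0P
    · exact h
  -- minimum of pairing w over P
  obtain ⟨s₀, hs₀S, hs₀min⟩ := S.exists_min_image (pairing w) hSne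
  set m : ℚ := pairing w s₀ with hm
  have hmin : ∀ x ∈ P, m ≤ pairing w x := by
    rw [hPS]; exact le_pairing_hull hs₀min
  -- m is a negative integer
  obtain ⟨z0, hz0⟩ := hSlat s₀ hs₀S 0
  obtain ⟨z1, hz1⟩ := hSlat s₀ hs₀S 1
  have hmint : m = ((w 0 * z0 + w 1 * z1 : ℤ) : ℚ) := by
    rw [hm]; simp only [pairing, Fin.sum_univ_two, hz0, hz1]; push_cast; ring
  set m' : ℤ := w 0 * z0 + w 1 * z1 with hm'def
  -- m < 0 using the interior point
  have hmneg : m < 0 := by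
    obtain ⟨ε, hε, hball⟩ := Metric.mem_nhds_iff.mp (mem_interior_iff_mem_nhds.mp h0)
    obtain ⟨δ', hδ'0, hδ'ε⟩ := exists_rat_btwn hε
    have hδ'0' : (0 : ℚ) < δ' := by exact_mod_cast hδ'0
    set B : ℚ := |(w 0 : ℚ)| + |(w 1 : ℚ)| + 1 with hB
    have hBpos : 0 < B := by positivity
    set δ : ℚ := δ' / B with hδ
    have hδpos : 0 < δ := div_pos hδ'0' hBpos
    set x : Fin 2 → ℚ := fun i => -δ * (w i : ℚ) with hx
    have hxball : x ∈ Metric.ball (0 : Fin 2 → ℚ) ε := by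
      rw [Metric.mem_ball, dist_pi_lt_iff hε]
      intro i
      have habs : |x i| < δ' := by
        have h1 : |x i| = δ * |(w i : ℚ)| := by
          rw [hx]; rw [abs_mul, abs_neg, abs_of_pos hδpos]
        have h2 : |(w i : ℚ)| < B := by
          rcases i with ⟨iv, hiv⟩
          interval_cases iv
          · show |(w 0 : ℚ)| < B
            rw [hB]; linarith [abs_nonneg ((w 1 : ℚ))]
          · show |(w 1 : ℚ)| < B
            rw [hB]; linarith [abs_nonneg ((w 0 : ℚ))]
        calc |x i| = δ * |(w i : ℚ)| := h1
          _ < δ * B := by exact mul_lt_mul_of_pos_left h2 hδpos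
          _ = δ' := by rw [hδ]; field_simp
      have hd : dist (x i) ((0 : Fin 2 → ℚ) i) = ((|x i| : ℚ) : ℝ) := by
        rw [Pi.zero_apply, Rat.dist_eq, Rat.cast_abs]
        norm_num
      rw [hd]
      calc ((|x i| : ℚ) : ℝ) < ((δ' : ℚ) : ℝ) := by exact_mod_cast habs
        _ < ε := hδ'ε
    have hxP : x ∈ P := hball hxball
    have hpx : pairing w x = -δ * ((w 0 : ℚ) ^ 2 + (w 1 : ℚ) ^ 2) := by
      simp only [pairing, Fin.sum_univ_two, hx]; ring
    have hW : 0 < (w 0 : ℚ) ^ 2 + (w 1 : ℚ) ^ 2 := by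
      rcases not_and_or.mp hwne with h | h
      · positivity
      · positivity
    have : pairing w x < 0 := by rw [hpx]; exact mul_neg_of_neg_of_pos (by linarith) hW
    exact lt_of_le_of_lt (hmin x hxP) this
  have hm'neg : m' < 0 := by
    have : ((m' : ℤ) : ℚ) < 0 := by rw [← hmint]; exact hmneg
    exact_mod_cast this
  -- extreme point of P at level m
  set T : Finset (Fin 2 → ℚ) := S.filter (fun s => pairing w s = m) with hT
  have hs₀T : s₀ ∈ T := Finset.mem_filter.mpr ⟨hs₀S, rfl⟩
  set wp : Fin 2 → ℤ := ![-w 1, w 0] with hwp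
  obtain ⟨t, htT, htmin⟩ := T.exists_min_image (pairing wp) ⟨s₀, hs₀T⟩
  have htS : t ∈ S := (Finset.mem_filter.mp htT).1
  have htm : pairing w t = m := (Finset.mem_filter.mp htT).2
  have htP : t ∈ P := by rw [hPS]; exact subset_convexHull ℚ _ htS
  have htep : t ∈ P.extremePoints ℚ := by
    rw [mem_extremePoints]
    refine ⟨htP, ?_⟩
    intro a ha b hb hseg
    obtain ⟨sc, rc, hsc, hrc, hscrc, hcomb⟩ := hseg
    have hcombp : sc * pairing w a + rc * pairing w b = m := by
      rw [← pairing_combo, hcomb, htm]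
    obtain ⟨hpa, hpb⟩ := combo_forces hsc hrc hscrc (hmin a ha) (hmin b hb) hcombp
    have haT : a ∈ convexHull ℚ (T : Set (Fin 2 → ℚ)) :=
      mem_hull_filter hs₀min (hPS ▸ ha) hpa
    have hbT : b ∈ convexHull ℚ (T : Set (Fin 2 → ℚ)) :=
      mem_hull_filter hs₀min (hPS ▸ hb) hpb
    have hga : pairing wp t ≤ pairing wp a := le_pairing_hull htmin a haT
    have hgb : pairing wp t ≤ pairing wp b := le_pairing_hull htmin b hbT
    have hcombg : sc * pairing wp a + rc * pairing wp b = pairing wp t := by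
      rw [← pairing_combo, hcomb]
    obtain ⟨hga', hgb'⟩ := combo_forces hsc hrc hscrc hga hgb hcombg
    have hab : a = b := eq_of_pairings hwne (by rw [hpa, hpb]) (by rw [hga', hgb'])
    have hat : a = t := by
      rw [← hcomb, hab, ← add_smul, hscrc, one_smul]
    exact ⟨hat, hab ▸ hat⟩
  -- apply the mutation data at level m'
  obtain ⟨-, -, -, hdat⟩ := hdata
  obtain ⟨-, hsub, hslice⟩ := hdat m' hm'neg
  have htlev : t ∈ {v | v ∈ P.extremePoints ℚ ∧ pairing w v = (m' : ℚ)} :=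
    ⟨htep, by rw [htm, hmint]⟩
  obtain ⟨gp, hgp, fv, hfv, hsum⟩ := hsub htlev
  -- two distinct points of F give two distinct points of the slice
  obtain ⟨f1, hf1, f2, hf2, hf12⟩ := Set.not_subsingleton_iff.mp hF
  have hc0 : (0 : ℚ) < -(m' : ℚ) := by
    have : ((m' : ℤ) : ℚ) < 0 := by exact_mod_cast hm'neg
    linarith
  have hx1 : gp + (-(m' : ℚ)) • f1 ∈ wSlice w m' P :=
    hslice (Set.add_mem_add hgp (Set.smul_mem_smul_set hf1))
  have hx2 : gp + (-(m' : ℚ)) • f2 ∈ wSlice w m' P :=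
    hslice (Set.add_mem_add hgp (Set.smul_mem_smul_set hf2))
  have hx12 : gp + (-(m' : ℚ)) • f1 ≠ gp + (-(m' : ℚ)) • f2 := by
    intro h
    exact hf12 (smul_right_injective _ (ne_of_gt hc0) (add_left_cancel h))
  -- hence two distinct lattice points of P at level m'
  set L : Set (Fin 2 → ℚ) := {x | x ∈ P ∧ IsLatticePt x ∧ pairing w x = (m' : ℚ)} with hL
  have hLnt : L.Nontrivial := by
    rcases Set.subsingleton_or_nontrivial L with hs | hnt
    · exfalso
      rcases hs.eq_empty_or_singleton with he | ⟨a, ha⟩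
      · rw [wSlice, ← hL, he, convexHull_empty] at hx1; exact hx1
      · rw [wSlice, ← hL, ha, convexHull_singleton] at hx1 hx2
        exact hx12 (hx1.trans hx2.symm)
    · exact hnt
  obtain ⟨p, hpL, q, hqL, hpq⟩ := hLnt
  obtain ⟨hpP, -, hpm⟩ := hpL
  obtain ⟨hqP, -, hqm⟩ := hqL
  -- build the dual vertex
  set c : ℚ := -(m' : ℚ) with hc
  set u : Fin 2 → ℚ := c⁻¹ • (fun i => (w i : ℚ)) with hu
  have hdpair : ∀ v : Fin 2 → ℚ, dpair u v = c⁻¹ * pairing w v := by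
    intro v
    simp only [dpair, pairing, hu, Fin.sum_univ_two, Pi.smul_apply, smul_eq_mul]
    ring
  have humem : u ∈ dualP P := by
    intro v hv
    rw [hdpair]
    have h1 : m ≤ pairing w v := hmin v hv
    have h2 : c⁻¹ * m ≤ c⁻¹ * pairing w v :=
      mul_le_mul_of_nonneg_left h1 (inv_nonneg.mpr hc0.le)
    have h3 : c⁻¹ * m = -1 := by
      rw [hmint, hc]; field_simp; rw [div_self (by exact_mod_cast hm'neg.ne)]
    linarith
  have hup : dpair u p = -1 := by
    rw [hdpair, hpm, hc]; field_simp; rw [div_self (by exact_mod_cast hm'neg.ne)]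
  have huq : dpair u q = -1 := by
    rw [hdpair, hqm, hc]; field_simp; rw [div_self (by exact_mod_cast hm'neg.ne)]
  refine ⟨u, ?_, c, hc0, ?_⟩
  · rw [mem_extremePoints]
    refine ⟨humem, ?_⟩
    intro a ha b hb hseg
    obtain ⟨sc, rc, hsc, hrc, hscrc, hcomb⟩ := hseg
    have hcombp : sc * dpair a p + rc * dpair b p = -1 := by
      rw [← dpair_combo, hcomb, hup]
    have hcombq : sc * dpair a q + rc * dpair b q = -1 := by
      rw [← dpair_combo, hcomb, huq]
    obtain ⟨hap, hbp⟩ := combo_forces hsc hrc hscrc (ha p hpP) (hb p hpP) hcombp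
    obtain ⟨haq, hbq⟩ := combo_forces hsc hrc hscrc (ha q hqP) (hb q hqP) hcombq
    exact ⟨dual_eq hap haq hup huq hpq, dual_eq hbp hbq hup huq hpq⟩
  · rw [hu, smul_smul, mul_inv_cancel₀ (ne_of_gt hc0), one_smul]
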